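/- Let L be a finite-dimensional simple Lie algebra over an algebraically closed field F of characteristic not 2. Then every linear commuting map f : L → L, i.e., a linear map with [f(x),x] = 0 for all x (equivalently [f(x),y] = [x,f(y)] for all x,y), is a scalar multiple of the identity. -/

import Mathlib

section Aux

variable {F L : Type*} [Field F] [LieRing L] [LieAlgebra F L]

/-- iterated bracket, innermost letter first -/
def wrdI (l : List L) (v : L) : L := l.foldl (fun acc a => ⁅a, acc⁆) v

@[simp] lemma wrdI_nil (v : L) : wrdI ([] : List L) v = v := rfl
@[simp] lemma wrdI_cons (x : L) (l : List L) (v : L) : wrdI (x :: l) v = wrdI l ⁅x, v⁆ := rfl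

/-- iterated bracket, outermost letter first -/
def wrdO (l : List L) (v : L) : L := l.foldr (fun a acc => ⁅a, acc⁆) v

@[simp] lemma wrdO_nil (v : L) : wrdO ([] : List L) v = v := rfl
@[simp] lemma wrdO_cons (x : L) (l : List L) (v : L) : wrdO (x :: l) v = ⁅x, wrdO l v⁆ := rfl

lemma wrdI_add (l : List L) : ∀ a b : L, wrdI l (a + b) = wrdI l a + wrdI l b := by
  induction l with
  | nil => intro a b; simp
  | cons x l ih => intro a b; simp only [wrdI_cons, lie_add]; exact ih _ _

lemma wrdI_sub (l : List L) : ∀ a b : L, wrdI l (a - b) = wrdI l a - wrdI l b := by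
  induction l with
  | nil => intro a b; simp
  | cons x l ih => intro a b; simp only [wrdI_cons, lie_sub]; exact ih _ _

lemma wrdI_smul (l : List L) : ∀ (c : F) (a : L), wrdI l (c • a) = c • wrdI l a := by
  induction l with
  | nil => intro c a; simp
  | cons x l ih => intro c a; simp only [wrdI_cons, lie_smul]; exact ih _ _

lemma wrdI_zero (l : List L) : wrdI l (0 : L) = 0 := by
  induction l with
  | nil => rfl
  | cons x l ih => simp only [wrdI_cons, lie_zero]; exact ih

lemma eq_zero_of_central [LieAlgebra.IsSimple F L] (c : L) (h : ∀ y : L, ⁅y, c⁆ = 0) :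
    c = 0 := by
  have hc : c ∈ LieAlgebra.center F L := (LieModule.mem_maxTrivSubmodule F L L c).2 h
  rcases LieAlgebra.IsSimple.eq_bot_or_eq_top (LieAlgebra.center F L) with hb | ht
  · rw [hb] at hc; simpa using hc
  · exact absurd ((LieAlgebra.isLieAbelian_iff_center_eq_top F L).2 ht)
      (LieAlgebra.IsSimple.non_abelian F)

lemma half_cancel (h2F : (2 : F) ≠ 0) (a : L) (ha : a = -a) : a = 0 := by
  have h2a : (2 : F) • a = 0 := by
    rw [two_smul]
    nth_rewrite 2 [ha]
    exact add_neg_cancel a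
  rcases smul_eq_zero.mp h2a with h | h
  · exact absurd h h2F
  · exact h

/-- A square-zero commuting linear map on a simple Lie algebra vanishes. -/
lemma sq_zero_comm_eq_zero [LieAlgebra.IsSimple F L] (h2F : (2 : F) ≠ 0)
    (M : Module.End F L) (hc : ∀ x y : L, ⁅M x, y⁆ = ⁅x, M y⁆) (hMM : ∀ x, M (M x) = 0) :
    ∀ x, M x = 0 := by
  -- the trilinear map G vanishes
  have sym : ∀ y z x : L, ⁅M y, ⁅M z, x⁆⁆ = ⁅M z, ⁅M y, x⁆⁆ := by
    intro y z x
    have h0 : ⁅M y, M z⁆ = 0 := by rw [hc, hMM, lie_zero]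
    rw [leibniz_lie (M y) (M z) x, h0, zero_lie, zero_add]
  have anti : ∀ y z x : L, ⁅M y, ⁅M z, x⁆⁆ = -⁅M y, ⁅M x, z⁆⁆ := by
    intro y z x
    have e : ⁅M z, x⁆ = -⁅M x, z⁆ := by
      rw [hc z x, ← lie_skew, hc x z]
    calc ⁅M y, ⁅M z, x⁆⁆ = ⁅y, M ⁅M z, x⁆⁆ := hc y _
      _ = ⁅y, M (-⁅M x, z⁆)⁆ := by rw [e]
      _ = -⁅y, M ⁅M x, z⁆⁆ := by rw [map_neg, lie_neg]
      _ = -⁅M y, ⁅M x, z⁆⁆ := by rw [hc y]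
  have hG : ∀ y z x : L, ⁅M y, ⁅M z, x⁆⁆ = 0 := by
    intro y z x
    apply half_cancel h2F
    calc ⁅M y, ⁅M z, x⁆⁆ = ⁅M z, ⁅M y, x⁆⁆ := sym y z x
      _ = -⁅M z, ⁅M x, y⁆⁆ := anti z y x
      _ = -⁅M x, ⁅M z, y⁆⁆ := by rw [sym z x y]
      _ = -(-⁅M x, ⁅M y, z⁆⁆) := by rw [anti x z y]
      _ = ⁅M x, ⁅M y, z⁆⁆ := neg_neg _
      _ = ⁅M y, ⁅M x, z⁆⁆ := sym x y z
      _ = -⁅M y, ⁅M z, x⁆⁆ := by rw [anti y x z]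
  have Mone : ∀ z x : L, M ⁅z, M x⁆ = 0 := by
    intro z x
    apply eq_zero_of_central (F := F)
    intro y
    calc ⁅y, M ⁅z, M x⁆⁆ = ⁅M y, ⁅z, M x⁆⁆ := (hc y _).symm
      _ = ⁅M y, ⁅M z, x⁆⁆ := by rw [← hc z x]
      _ = 0 := hG y z x
  -- the word lemma
  have key : ∀ n : ℕ, ∀ l : List L, l.length ≤ n → ∀ u : L, M (wrdI l (M u)) = 0 := by
    intro n
    induction n with
    | zero =>
      intro l hl u
      have : l = [] := List.length_eq_zero_iff.mp (Nat.le_zero.mp hl)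
      subst this
      simpa using hMM u
    | succ n ih =>
      intro l hl u
      match l with
      | [] => simpa using hMM u
      | [z] => simpa using Mone z u
      | z :: y :: r =>
        have hr : r.length + 1 ≤ n := by
          simp only [List.length_cons] at hl
          omega
        have ih1 : ∀ (a v : L), M (wrdI (a :: r) (M v)) = 0 := fun a v =>
          ih (a :: r) (by simpa using hr) v
        have expand : ⁅y, ⁅z, M u⁆⁆
            = ⁅y, M ⁅z, u⁆⁆ - ⁅z, ⁅y, M u⁆⁆ + ⁅z, M ⁅y, u⁆⁆ := by
          have e1 : ⁅z, M u⁆ = ⁅M z, u⁆ := (hc z u).symm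
          rw [e1, leibniz_lie y (M z) u]
          have e2 : ⁅M z, ⁅y, u⁆⁆ = ⁅z, M ⁅y, u⁆⁆ := hc z _
          have e3 : ⁅y, M z⁆ = ⁅M y, z⁆ := (hc y z).symm
          rw [e2, e3, lie_lie, hc y, hc y]
        have hanti : M (wrdI (z :: y :: r) (M u)) = -M (wrdI (y :: z :: r) (M u)) := by
          have lhs : wrdI (z :: y :: r) (M u) = wrdI r ⁅y, ⁅z, M u⁆⁆ := rfl
          have rhs : wrdI (y :: z :: r) (M u) = wrdI r ⁅z, ⁅y, M u⁆⁆ := rfl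
          rw [lhs, rhs, expand, wrdI_add, wrdI_sub, map_add, map_sub]
          have t1 : M (wrdI r ⁅y, M ⁅z, u⁆⁆) = 0 := by
            have := ih1 y ⁅z, u⁆
            simpa using this
          have t3 : M (wrdI r ⁅z, M ⁅y, u⁆⁆) = 0 := by
            have := ih1 z ⁅y, u⁆
            simpa using this
          rw [t1, t3]
          abel
        have hsym : M (wrdI (z :: y :: r) (M u)) = M (wrdI (y :: z :: r) (M u)) := by
          have lhs : wrdI (z :: y :: r) (M u) = wrdI r ⁅y, ⁅z, M u⁆⁆ := rfl
          have rhs : wrdI (y :: z :: r) (M u) = wrdI r ⁅z, ⁅y, M u⁆⁆ := rfl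
          have e : ⁅y, ⁅z, M u⁆⁆ - ⁅z, ⁅y, M u⁆⁆ = ⁅⁅y, z⁆, M u⁆ := (lie_lie y z (M u)).symm
          have : M (wrdI (z :: y :: r) (M u)) - M (wrdI (y :: z :: r) (M u)) = 0 := by
            rw [lhs, rhs, ← map_sub, ← wrdI_sub, e]
            have := ih1 ⁅y, z⁆ u
            simpa using this
          exact sub_eq_zero.mp this
        exact half_cancel h2F _ (hanti.trans (by rw [hsym]))
  have alll : ∀ (l : List L) (u : L), M (wrdI l (M u)) = 0 := fun l u => key l.length l le_rfl u
  -- the Lie ideal of vectors all of whose iterated brackets are killed by M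
  let Ssub : Submodule F L :=
    { carrier := {v | ∀ l : List L, M (wrdI l v) = 0}
      add_mem' := by
        intro a b ha hb l
        rw [wrdI_add, map_add, ha l, hb l, add_zero]
      zero_mem' := by
        intro l
        rw [wrdI_zero, map_zero]
      smul_mem' := by
        intro c a ha l
        rw [wrdI_smul, map_smul, ha l, smul_zero] }
  let S : LieIdeal F L :=
    { Ssub with
      lie_mem := by
        intro x m hm
        intro l
        exact hm (x :: l) }
  rcases LieAlgebra.IsSimple.eq_bot_or_eq_top S with hb | ht
  · intro x
    have hx : M x ∈ S := fun l => alll l x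
    rw [hb] at hx
    simpa using hx
  · intro x
    have hx : x ∈ S := by rw [ht]; trivial
    have := hx []
    simpa using this

/-- powers of a commuting map are commuting -/
lemma pow_comm (N : Module.End F L) (hcN : ∀ x y : L, ⁅N x, y⁆ = ⁅x, N y⁆) :
    ∀ (k : ℕ) (x y : L), ⁅(N ^ k) x, y⁆ = ⁅x, (N ^ k) y⁆ := by
  intro k
  induction k with
  | zero => intro x y; simp
  | succ k ih =>
    intro x y
    have e1 : (N ^ (k + 1)) x = N ((N ^ k) x) := by
      rw [pow_succ']; rfl
    have e2 : (N ^ (k + 1)) y = (N ^ k) (N y) := by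
      rw [pow_succ]; rfl
    rw [e1, e2, hcN, ih]

/-- A nilpotent commuting map on a simple Lie algebra vanishes. -/
lemma nilpotent_comm_eq_zero [LieAlgebra.IsSimple F L] (h2F : (2 : F) ≠ 0) :
    ∀ (k : ℕ) (N : Module.End F L), (∀ x y : L, ⁅N x, y⁆ = ⁅x, N y⁆) → N ^ k = 0 →
      ∀ x, N x = 0 := by
  intro k
  induction k using Nat.strong_induction_on with
  | _ k ih =>
    intro N hcN hNk x
    match k with
    | 0 =>
      have h1 : (1 : Module.End F L) = 0 := by simpa using hNk
      have hx : x = 0 := by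
        have := LinearMap.ext_iff.mp h1 x
        simpa using this
      rw [hx, map_zero]
    | 1 =>
      have : N = 0 := by simpa using hNk
      rw [this]; rfl
    | (m + 2) =>
      have hsq : ∀ v, (N ^ (m + 1)) ((N ^ (m + 1)) v) = 0 := by
        intro v
        have : N ^ (m + 1) * N ^ (m + 1) = 0 := by
          rw [← pow_add]
          have he : (m + 1) + (m + 1) = (m + 2) + m := by omega
          rw [he, pow_add, hNk, zero_mul]
        calc (N ^ (m + 1)) ((N ^ (m + 1)) v) = (N ^ (m + 1) * N ^ (m + 1)) v := rfl
          _ = 0 := by rw [this]; rfl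
      have hz := sq_zero_comm_eq_zero h2F (N ^ (m + 1)) (pow_comm N hcN (m + 1)) hsq
      have : N ^ (m + 1) = 0 := LinearMap.ext hz
      exact ih (m + 1) (by omega) N hcN this x

/-- bracket-orthogonality of distinct generalized eigenspaces of a commuting map -/
lemma orth_gen (f : Module.End F L) (hcomm : ∀ x y : L, ⁅f x, y⁆ = ⁅x, f y⁆) {μ ν : F}
    (hne : μ ≠ ν) :
    ∀ (m n : ℕ) (x y : L),
      ((f - μ • 1) ^ m) x = 0 → ((f - ν • 1) ^ n) y = 0 → ⁅x, y⁆ = 0 := by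
  intro m
  induction m with
  | zero =>
    intro n x y hx _
    have : x = 0 := by simpa using hx
    simp [this]
  | succ m ihm =>
    intro n
    induction n with
    | zero =>
      intro x y _ hy
      have : y = 0 := by simpa using hy
      simp [this]
    | succ n ihn =>
      intro x y hx hy
      have hx' : ((f - μ • 1) ^ m) ((f - μ • 1) x) = 0 := by
        have : ((f - μ • 1) ^ (m + 1)) x = ((f - μ • 1) ^ m) ((f - μ • 1) x) := by
          rw [pow_succ]; rfl
        rw [← this]; exact hx
      have hy' : ((f - ν • 1) ^ n) ((f - ν • 1) y) = 0 := by
        have : ((f - ν • 1) ^ (n + 1)) y = ((f - ν • 1) ^ n) ((f - ν • 1) y) := by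
          rw [pow_succ]; rfl
        rw [← this]; exact hy
      have h1 : ⁅(f - μ • 1) x, y⁆ = 0 := ihm (n + 1) _ y hx' hy
      have h2 : ⁅x, (f - ν • 1) y⁆ = 0 := ihn x _ hx hy'
      have e1 : ⁅(f - μ • 1) x, y⁆ = ⁅f x, y⁆ - μ • ⁅x, y⁆ := by
        simp [LinearMap.sub_apply, LinearMap.smul_apply, sub_lie, smul_lie]
      have e2 : ⁅x, (f - ν • 1) y⁆ = ⁅x, f y⁆ - ν • ⁅x, y⁆ := by
        simp [LinearMap.sub_apply, LinearMap.smul_apply, lie_sub, lie_smul]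
      rw [e1] at h1
      rw [e2] at h2
      have hA : ⁅f x, y⁆ = μ • ⁅x, y⁆ := sub_eq_zero.mp h1
      have hB : ⁅x, f y⁆ = ν • ⁅x, y⁆ := sub_eq_zero.mp h2
      have h3 : μ • ⁅x, y⁆ = ν • ⁅x, y⁆ := by rw [← hA, ← hB, hcomm]
      have h4 : (μ - ν) • ⁅x, y⁆ = 0 := by rw [sub_smul, h3, sub_self]
      rcases smul_eq_zero.mp h4 with h | h
      · exact absurd h (sub_ne_zero.mpr hne)
      · exact h

end Aux

theorem commuting_map_is_scalar
    {F L : Type*} [Field F] [IsAlgClosed F] (hchar : ringChar F ≠ 2)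
    [LieRing L] [LieAlgebra F L] [Module.Finite F L] [LieAlgebra.IsSimple F L]
    (f : L →ₗ[F] L)
    (hcomm : ∀ x y : L, ⁅f x, y⁆ = ⁅x, f y⁆) :
    ∃ lam : F, ∀ x : L, f x = lam • x := by
  haveI : Nontrivial L := by
    by_contra h
    rw [not_nontrivial_iff_subsingleton] at h
    exact (LieAlgebra.IsSimple.non_abelian F (L := L)) ⟨fun x y => Subsingleton.elim _ _⟩
  have h2F : (2 : F) ≠ 0 := Ring.two_ne_zero hchar
  obtain ⟨lam, hlam⟩ := Module.End.exists_eigenvalue (f : Module.End F L)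
  refine ⟨lam, ?_⟩
  set U : Submodule F L := Module.End.maxGenEigenspace (f : Module.End F L) lam with hUdef
  set V : Submodule F L :=
    ⨆ μ ∈ {μ : F | μ ≠ lam}, Module.End.maxGenEigenspace (f : Module.End F L) μ with hVdef
  -- orthogonality between U and the other generalized eigenspaces
  have hUorth : ∀ u ∈ U, ∀ b ∈ V, ⁅u, b⁆ = 0 := by
    intro u hu
    have hle : V ≤ LinearMap.ker (LieAlgebra.ad F L u) := by
      rw [hVdef]
      refine iSup₂_le ?_
      intro μ hμ b hb
      rw [LinearMap.mem_ker, LieAlgebra.ad_apply]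
      obtain ⟨k, hk⟩ := (Module.End.mem_maxGenEigenspace _ _ _).mp hu
      obtain ⟨k', hk'⟩ := (Module.End.mem_maxGenEigenspace _ _ _).mp hb
      exact orth_gen (f : Module.End F L) hcomm (Ne.symm hμ) k k' u b hk hk'
    intro b hb
    have := hle hb
    rwa [LinearMap.mem_ker, LieAlgebra.ad_apply] at this
  have hVU : ∀ b ∈ V, ∀ u ∈ U, ⁅b, u⁆ = 0 := by
    intro b hb u hu
    rw [← lie_skew, hUorth u hu b hb, neg_zero]
  have hUV_top : U ⊔ V = ⊤ := by
    rw [eq_top_iff, ← Module.End.iSup_maxGenEigenspace_eq_top (f : Module.End F L)]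
    refine iSup_le ?_
    intro μ
    by_cases hμ : μ = lam
    · subst hμ; exact le_sup_left
    · exact le_trans (le_iSup₂ (f := fun μ _ =>
        Module.End.maxGenEigenspace (f : Module.End F L) μ) μ hμ) le_sup_right
  -- the set of iterated brackets of elements of U
  set genSet : Set L := {x | ∃ l : List L, (∀ a ∈ l, a ∈ U) ∧ ∃ v ∈ U, x = wrdO l v}
    with hgenSet
  have hgen_kill : ∀ b ∈ V, ∀ g ∈ genSet, ⁅b, g⁆ = 0 := by
    rintro b hb g ⟨l, hl, v, hv, rfl⟩
    clear hgenSet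
    induction l with
    | nil => exact hVU b hb v hv
    | cons a l ih =>
      have ha : a ∈ U := hl a List.mem_cons_self
      have hl' : ∀ x ∈ l, x ∈ U := fun x hx => hl x (List.mem_cons_of_mem a hx)
      rw [wrdO_cons, leibniz_lie, hVU b hb a ha, zero_lie, ih hl', lie_zero, add_zero]
  have hgen_mem : ∀ u ∈ U, ∀ g ∈ genSet, ⁅u, g⁆ ∈ genSet := by
    rintro u hu g ⟨l, hl, v, hv, rfl⟩
    exact ⟨u :: l, by
      intro a ha
      rcases List.mem_cons.mp ha with h | h
      · subst h; exact hu
      · exact hl a h, v, hv, rfl⟩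
  set Jsub : Submodule F L := Submodule.span F genSet with hJsub
  have hJlie : ∀ (x : L), ∀ m ∈ Jsub, ⁅x, m⁆ ∈ Jsub := by
    intro x m hm
    obtain ⟨u, hu, b, hb, rfl⟩ := Submodule.mem_sup.mp
      (hUV_top ▸ Submodule.mem_top : x ∈ U ⊔ V)
    induction hm using Submodule.span_induction with
    | mem g hg =>
      have : ⁅u + b, g⁆ = ⁅u, g⁆ + ⁅b, g⁆ := add_lie u b g
      rw [this, hgen_kill b hb g hg, add_zero]
      exact Submodule.subset_span (hgen_mem u hu g hg)
    | zero => rw [lie_zero]; exact Submodule.zero_mem _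
    | add p q hp hq ihp ihq => rw [lie_add]; exact Submodule.add_mem _ ihp ihq
    | smul c p hp ihp => rw [lie_smul]; exact Submodule.smul_mem _ c ihp
  let J : LieIdeal F L :=
    { Jsub with
      lie_mem := fun {x m} hm => hJlie x m hm }
  obtain ⟨v₀, hv₀⟩ := hlam.exists_hasEigenvector
  have hv₀U : v₀ ∈ U := by
    rw [hUdef, Module.End.mem_maxGenEigenspace]
    refine ⟨1, ?_⟩
    have := hv₀.apply_eq_smul
    simp [pow_one, LinearMap.sub_apply, LinearMap.smul_apply, this]
  have hv₀J : v₀ ∈ Jsub := Submodule.subset_span ⟨[], by simp, v₀, hv₀U, rfl⟩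
  have hJtop : Jsub = (⊤ : Submodule F L) := by
    rcases LieAlgebra.IsSimple.eq_bot_or_eq_top (R := F) J with hbot | htop
    · exfalso
      have : v₀ ∈ J := hv₀J
      rw [hbot] at this
      exact hv₀.right (by simpa using this)
    · have : (J : Submodule F L) = ⊤ := by
        rw [htop]; rfl
      exact this
  have hVbot : ∀ b ∈ V, b = (0 : L) := by
    intro b hb
    apply eq_zero_of_central (F := F)
    intro y
    have hy : y ∈ Jsub := by rw [hJtop]; trivial
    have hby : ⁅b, y⁆ = 0 := by
      induction hy using Submodule.span_induction with
      | mem g hg => exact hgen_kill b hb g hg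
      | zero => exact lie_zero b
      | add p q hp hq ihp ihq => rw [lie_add, ihp, ihq, add_zero]
      | smul c p hp ihp => rw [lie_smul, ihp, smul_zero]
    rw [← lie_skew, hby, neg_zero]
  have hUtop : U = (⊤ : Submodule F L) := by
    rw [eq_top_iff, ← hUV_top]
    refine sup_le le_rfl ?_
    intro b hb
    rw [hVbot b hb]
    exact Submodule.zero_mem _
  -- N := f - lam • 1 is nilpotent
  set N : Module.End F L := (f : Module.End F L) - lam • 1 with hNdef
  have hcN : ∀ x y : L, ⁅N x, y⁆ = ⁅x, N y⁆ := by
    intro x y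
    have e1 : N x = f x - lam • x := by
      simp [hNdef, LinearMap.sub_apply, LinearMap.smul_apply]
    have e2 : N y = f y - lam • y := by
      simp [hNdef, LinearMap.sub_apply, LinearMap.smul_apply]
    rw [e1, e2, sub_lie, lie_sub, smul_lie, lie_smul, hcomm]
  have hex : ∀ a : L, ∃ k : ℕ, (N ^ k) a = 0 := by
    intro a
    have ha : a ∈ U := by rw [hUtop]; trivial
    rw [hUdef, Module.End.mem_maxGenEigenspace] at ha
    exact ha
  choose kk hkk using hex
  obtain ⟨s, hs⟩ := Module.finite_def.mp (inferInstance : Module.Finite F L)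
  set K : ℕ := s.sup kk with hK
  have hNK : ∀ x : L, (N ^ K) x = 0 := by
    have hgen : ∀ a ∈ (s : Set L), (N ^ K) a = 0 := by
      intro a ha
      have hka : kk a ≤ K := Finset.le_sup ha
      have : N ^ K = N ^ (K - kk a) * N ^ kk a := by
        rw [← pow_add]
        congr 1
        omega
      rw [this]
      have : (N ^ (K - kk a) * N ^ kk a) a = (N ^ (K - kk a)) ((N ^ kk a) a) := rfl
      rw [this, hkk a, map_zero]
    intro x
    have hx : x ∈ Submodule.span F (s : Set L) := by rw [hs]; trivial
    induction hx using Submodule.span_induction with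
    | mem g hg => exact hgen g hg
    | zero => exact map_zero _
    | add p q hp hq ihp ihq => rw [map_add, ihp, ihq, add_zero]
    | smul c p hp ihp => rw [map_smul, ihp, smul_zero]
  have hN0 : ∀ x : L, N x = 0 :=
    nilpotent_comm_eq_zero h2F K N hcN (LinearMap.ext hNK)
  intro x
  have := hN0 x
  have e : N x = f x - lam • x := by
    simp [hNdef, LinearMap.sub_apply, LinearMap.smul_apply]
  rw [e] at this
  exact sub_eq_zero.mp this
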